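/- For every integer j ≥ 0, the Laurent polynomial D_j^μ(f_κ) + ∑_{m=0}^{j} binom(j+1, m+1)·z^{j−m}·D_m^λ(f_κ) + z^{j+1}·∂f_κ/∂z (where the coefficient binom(j+1,m+1)·z^{j−m} equals ∂_z^{(m+1)} z^{j+1}) has vanishing coefficient of z^n for every integer n < 0. In other words, the irregularity f_κ of the irregular Heisenberg vertex algebra is conformal with respect to the Der_0(ℂ[[t]])-structure given by the D_k. -/

import Mathlib

/-!
STATEMENT 4.
Fix r ≥ 1 and κ ≠ 0.  Let
  f_κ(z;λ,μ) := (1/(2κ))·∑_{1≤p,q≤r} C(p+q,p)·((−1)^{p+1}/(p+q))·λ_p·μ_q·z^{−(p+q)},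
a Laurent polynomial in z with coefficients in ℂ[λ_1,…,λ_r,μ_1,…,μ_r]
(modelled coefficientwise: `fk r κ n` is the coefficient of `z^n`; the
λ-variables are indexed by `Sum.inl`, the μ-variables by `Sum.inr`, and the
variable of index `i : Fin r` is λ_{i+1} resp. μ_{i+1}).  Let
  D_m^λ := ∑_{i=1}^{r−m} i·λ_{i+m}·∂/∂λ_i,  D_j^μ := ∑_{i=1}^{r−j} i·μ_{i+j}·∂/∂μ_i.
Then for every j ≥ 0, the Laurent polynomial
  D_j^μ(f_κ) + ∑_{m=0}^{j} C(j+1, m+1)·z^{j−m}·D_m^λ(f_κ) + z^{j+1}·∂f_κ/∂z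
has vanishing coefficient of z^n for every n < 0 (conformality of f_κ).
Coefficientwise, the coefficient of z^n of z^{j−m}·D_m^λ(f_κ) is
D_m^λ(f_κ at z^{n−(j−m)}), and that of z^{j+1}·∂f_κ/∂z is (n−j)·(f_κ at z^{n−j}).
-/

noncomputable section

/-- `D_k^λ` on `ℂ[λ_1,…,λ_r,μ_1,…,μ_r]`. -/
def Dlam (r k : ℕ) : Module.End ℂ (MvPolynomial (Fin r ⊕ Fin r) ℂ) :=
  ∑ j : Fin r,
    if h : (j : ℕ) + 1 + k ≤ r then
      (((j : ℕ) + 1 : ℕ) : ℂ) •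
        ((LinearMap.mulLeft ℂ
            (MvPolynomial.X (Sum.inl (⟨(j : ℕ) + k, by omega⟩ : Fin r)))).comp
          (MvPolynomial.pderiv (Sum.inl j)).toLinearMap)
    else 0

/-- `D_k^μ` on `ℂ[λ_1,…,λ_r,μ_1,…,μ_r]`. -/
def Dmu (r k : ℕ) : Module.End ℂ (MvPolynomial (Fin r ⊕ Fin r) ℂ) :=
  ∑ j : Fin r,
    if h : (j : ℕ) + 1 + k ≤ r then
      (((j : ℕ) + 1 : ℕ) : ℂ) •
        ((LinearMap.mulLeft ℂ
            (MvPolynomial.X (Sum.inr (⟨(j : ℕ) + k, by omega⟩ : Fin r)))).comp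
          (MvPolynomial.pderiv (Sum.inr j)).toLinearMap)
    else 0

/-- The coefficient of `z^n` in `f_κ(z;λ,μ)`.  For `p q : Fin r` (so the math
indices are `p+1`, `q+1`), the term `λ_{p+1} μ_{q+1} z^{-(p+q+2)}` carries the
scalar `(1/(2κ))·C(p+q+2, p+1)·(−1)^{p+2}/(p+q+2)`. -/
def fk (r : ℕ) (κ : ℂ) (n : ℤ) : MvPolynomial (Fin r ⊕ Fin r) ℂ :=
  ∑ p : Fin r, ∑ q : Fin r,
    if ((p : ℕ) + (q : ℕ) + 2 : ℤ) = -n then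
      MvPolynomial.C
        ((1 / (2 * κ)) * (Nat.choose ((p : ℕ) + (q : ℕ) + 2) ((p : ℕ) + 1) : ℂ) *
          (-1 : ℂ) ^ ((p : ℕ) + 2) / (((p : ℕ) : ℂ) + ((q : ℕ) : ℂ) + 2))
        * MvPolynomial.X (Sum.inl p) * MvPolynomial.X (Sum.inr q)
    else 0

lemma lemG : ∀ (nn M t : ℕ), nn ≤ M → t ≤ M →
    ∑ k ∈ Finset.range (nn+1), (-1:ℤ)^k * (nn.choose k : ℤ) *
      (if k ≤ t then ((M-k).choose (t-k) : ℤ) else 0) = ((M-nn).choose t : ℤ) := by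
  intro nn
  induction nn with
  | zero => intro M t _ _; simp
  | succ n ih =>
    intro M t hnM htM
    rw [Finset.sum_range_succ']
    have hsplit : ∀ i ∈ Finset.range (n+1),
        (-1:ℤ)^(i+1) * ((n+1).choose (i+1) : ℤ) *
          (if i+1 ≤ t then ((M-(i+1)).choose (t-(i+1)) : ℤ) else 0)
        = (-1:ℤ)^(i+1) * ((n).choose (i+1) : ℤ) *
            (if i+1 ≤ t then ((M-(i+1)).choose (t-(i+1)) : ℤ) else 0)
          + (-1:ℤ)^(i+1) * ((n).choose i : ℤ) *
            (if i+1 ≤ t then ((M-(i+1)).choose (t-(i+1)) : ℤ) else 0) := by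
      intro i _
      rw [Nat.choose_succ_succ]
      push_cast
      ring
    rw [Finset.sum_congr rfl hsplit, Finset.sum_add_distrib]
    have e1 : ∑ i ∈ Finset.range (n+1), (-1:ℤ)^(i+1) * ((n).choose (i+1) : ℤ) *
        (if i+1 ≤ t then ((M-(i+1)).choose (t-(i+1)) : ℤ) else 0)
        + (-1:ℤ)^0 * ((n+1).choose 0 : ℤ) * (if 0 ≤ t then ((M-0).choose (t-0) : ℤ) else 0)
        = ((M-n).choose t : ℤ) := by
      rw [Finset.sum_range_succ]
      have hzero : ((n).choose (n+1) : ℤ) = 0 := by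
        simp [Nat.choose_eq_zero_of_lt]
      rw [hzero]
      have := ih M t (by omega) htM
      rw [Finset.sum_range_succ'] at this
      simp only [Nat.choose_zero_right] at this ⊢
      linarith [this]
    have e2 : ∑ i ∈ Finset.range (n+1), (-1:ℤ)^(i+1) * ((n).choose i : ℤ) *
        (if i+1 ≤ t then ((M-(i+1)).choose (t-(i+1)) : ℤ) else 0)
        = -(if 1 ≤ t then ((M-1-n).choose (t-1) : ℤ) else 0) := by
      by_cases ht : 1 ≤ t
      · simp only [ht, if_true]
        rw [← ih (M-1) (t-1) (by omega) (by omega), ← Finset.sum_neg_distrib]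
        apply Finset.sum_congr rfl
        intro i _
        have h1 : (i+1 ≤ t) ↔ (i ≤ t-1) := by omega
        have h2 : M - (i+1) = M - 1 - i := by omega
        have h3 : t - (i+1) = t - 1 - i := by omega
        simp only [h1, h2, h3, pow_succ]
        split_ifs <;> ring
      · have ht0 : t = 0 := by omega
        subst ht0
        simp
    have hp' : ((M-n).choose t : ℤ)
        = (if 1 ≤ t then ((M-1-n).choose (t-1):ℤ) else 0) + ((M-(n+1)).choose t : ℤ) := by
      by_cases ht : 1 ≤ t
      · simp only [ht, if_true]
        have hps := Nat.choose_succ_succ (M-n-1) (t-1)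
        simp only [Nat.succ_eq_add_one] at hps
        rw [show M-n-1+1 = M-n by omega, show t-1+1 = t by omega] at hps
        rw [show M-1-n = M-n-1 by omega, show M-(n+1) = M-n-1 by omega, hps]
        push_cast
        ring
      · have ht0 : t = 0 := by omega
        subst ht0
        simp [show M-(n+1) = M-n-1 by omega]
    rw [e2]
    linarith [e1, hp']

lemma lemID (a b j : ℕ) (ha : 1 ≤ a) (hb : 1 ≤ b) (hj : j < a + b) :
    (if j < b then ((a+b-j-1).choose a : ℤ) else 0)
      + ∑ m ∈ Finset.range (j+1),
          (if m < a then (-1:ℤ)^m * ((j+1).choose (m+1) : ℤ) * ((a+b-m-1).choose (a-m-1) : ℤ) else 0)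
    = ((a+b).choose a : ℤ) := by
  have hG := lemG (j+1) (a+b) a (by omega) (by omega)
  rw [Finset.sum_range_succ'] at hG
  have hterm : ∀ i ∈ Finset.range (j+1),
      (if i < a then (-1:ℤ)^i * ((j+1).choose (i+1) : ℤ) * ((a+b-i-1).choose (a-i-1) : ℤ) else 0)
      = -((-1:ℤ)^(i+1) * ((j+1).choose (i+1) : ℤ) *
          (if i+1 ≤ a then ((a+b-(i+1)).choose (a-(i+1)) : ℤ) else 0)) := by
    intro i _
    have h1 : (i < a) ↔ (i+1 ≤ a) := by omega
    have h2 : a+b-(i+1) = a+b-i-1 := by omega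
    have h3 : a-(i+1) = a-i-1 := by omega
    simp only [h1, h2, h3, pow_succ]
    split_ifs <;> ring
  rw [Finset.sum_congr rfl hterm, Finset.sum_neg_distrib]
  have hfirst : (if j < b then ((a+b-j-1).choose a : ℤ) else 0) = ((a+b-(j+1)).choose a : ℤ) := by
    by_cases hjb : j < b
    · simp only [hjb, if_true]; rw [show a+b-(j+1) = a+b-j-1 by omega]
    · simp only [hjb, if_false]
      rw [Nat.choose_eq_zero_of_lt (by omega)]
      simp
  rw [hfirst]
  simp only [pow_zero, Nat.choose_zero_right, Nat.sub_zero, one_mul, Nat.cast_one] at hG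
  rw [if_pos (by omega : 0 ≤ a)] at hG
  linarith [hG]

noncomputable def co (κ : ℂ) (p q : ℕ) : ℂ :=
  (1 / (2 * κ)) * ((p+q+2).choose (p+1) : ℂ) * (-1:ℂ)^(p+2) / ((p:ℂ)+(q:ℂ)+2)

lemma div1 (p q' : ℕ) :
    ((q'+1 : ℕ) : ℂ) * (((p+q'+2).choose (p+1) : ℕ) : ℂ) / ((p:ℂ)+(q':ℂ)+2)
      = (((p+q'+1).choose (p+1) : ℕ) : ℂ) := by
  have hden : ((p:ℂ)+(q':ℂ)+2) = ((p+q'+2 : ℕ) : ℂ) := by push_cast; ring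
  have hne : ((p+q'+2 : ℕ) : ℂ) ≠ 0 := Nat.cast_ne_zero.mpr (by omega)
  rw [hden, div_eq_iff hne]
  have hnat : (q'+1) * ((p+q'+2).choose (p+1)) = ((p+q'+1).choose (p+1)) * (p+q'+2) := by
    have := Nat.choose_mul_succ_eq (p+q'+1) (p+1)
    rw [show p+q'+1+1 = p+q'+2 by omega, show p+q'+2-(p+1) = q'+1 by omega] at this
    linarith [this, Nat.mul_comm (q'+1) ((p+q'+2).choose (p+1))]
  exact_mod_cast hnat

lemma div2 (p' q : ℕ) :
    ((p'+1 : ℕ) : ℂ) * (((p'+q+2).choose (p'+1) : ℕ) : ℂ) / ((p':ℂ)+(q:ℂ)+2)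
      = (((p'+q+1).choose p' : ℕ) : ℂ) := by
  have hden : ((p':ℂ)+(q:ℂ)+2) = ((p'+q+2 : ℕ) : ℂ) := by push_cast; ring
  have hne : ((p'+q+2 : ℕ) : ℂ) ≠ 0 := Nat.cast_ne_zero.mpr (by omega)
  rw [hden, div_eq_iff hne]
  have hnat : (p'+1) * ((p'+q+2).choose (p'+1)) = ((p'+q+1).choose p') * (p'+q+2) := by
    have := Nat.add_one_mul_choose_eq (p'+q+1) p'
    rw [show p'+q+1+1 = p'+q+2 by omega] at this
    linarith [this, Nat.mul_comm (p'+1) ((p'+q+2).choose (p'+1)), Nat.mul_comm (p'+q+2) ((p'+q+1).choose p')]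
  exact_mod_cast hnat

lemma sgn (p m : ℕ) (h : m ≤ p) : (-1:ℂ)^(p-m) = (-1:ℂ)^p * (-1:ℂ)^m := by
  have key : (-1:ℂ)^(p-m) * (-1:ℂ)^m = (-1:ℂ)^p := by
    rw [← pow_add, show p-m+m = p by omega]
  have hm : ((-1:ℂ)^m) * ((-1:ℂ)^m) = 1 := by
    rw [← pow_add]
    exact Even.neg_one_pow ⟨m, rfl⟩
  calc (-1:ℂ)^(p-m) = (-1:ℂ)^(p-m) * (((-1:ℂ)^m) * ((-1:ℂ)^m)) := by rw [hm, mul_one]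
    _ = (-1:ℂ)^p * (-1:ℂ)^m := by rw [← mul_assoc, key]

lemma term1_eq (κ : ℂ) (P q' : ℕ) :
    ((q'+1 : ℕ):ℂ) * co κ P q'
      = (1/(2*κ)) * (-1:ℂ)^P * (((P+q'+1).choose (P+1) : ℕ) : ℂ) := by
  rw [co, ← div1 P q']
  ring

lemma term2_eq (κ : ℂ) (p' Q : ℕ) :
    ((p':ℂ)+1) * co κ p' Q
      = (1/(2*κ)) * (-1:ℂ)^(p') * (((p'+Q+1).choose p' : ℕ) : ℂ) := by
  rw [co, ← div2 p' Q]
  push_cast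
  ring

lemma scalar_zero (κ : ℂ) (hκ : κ ≠ 0) (j : ℕ) (n : ℤ) (hn : n < 0) (P Q : ℕ) :
    (if j ≤ Q then
        (if ((P:ℤ) + ((Q-j : ℕ):ℤ) + 2 = -n) then (((Q-j)+1 : ℕ):ℂ) * co κ P (Q-j) else 0)
      else 0)
    + (∑ m ∈ Finset.range (j+1), (((j+1).choose (m+1) : ℕ):ℂ) *
        (if m ≤ P then
            (if (((P-m : ℕ):ℤ) + (Q:ℤ) + 2 = -(n - ((j:ℤ) - (m:ℤ)))) then
              (((P-m)+1 : ℕ):ℂ) * co κ (P-m) Q else 0)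
          else 0))
    + ((n - (j:ℤ) : ℤ):ℂ) * (if ((P:ℤ) + (Q:ℤ) + 2 = -(n - (j:ℤ))) then co κ P Q else 0)
    = 0 := by
  by_cases hs : (P:ℤ) + (Q:ℤ) + 2 = (j:ℤ) - n
  · -- main case
    have hID := lemID (P+1) (Q+1) j (by omega) (by omega) (by omega)
    have hr4 : P+1+(Q+1) = P+Q+2 := by omega
    have hr2 : ∀ m : ℕ, P+Q+2-m-1 = P+Q+1-m := by intro m; omega
    have hr3 : ∀ m : ℕ, P+1-m-1 = P-m := by intro m; omega
    simp only [hr4, hr2, hr3] at hID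
    -- hID : (if j < Q+1 then C(P+Q+1-j,P+1) else 0)
    --        + ∑ m, (if m < P+1 then (-1)^m C(j+1,m+1) C(P+Q+1-m, P-m) else 0) = C(P+Q+2,P+1)
    have H1 : (if j ≤ Q then
        (if ((P:ℤ) + ((Q-j : ℕ):ℤ) + 2 = -n) then (((Q-j)+1 : ℕ):ℂ) * co κ P (Q-j) else 0)
      else 0)
        = (1/(2*κ)) * (-1:ℂ)^P *
            (((if j < Q+1 then ((P+Q+1-j).choose (P+1) : ℤ) else 0) : ℤ) : ℂ) := by
      by_cases hjQ : j ≤ Q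
      · rw [if_pos hjQ, if_pos (by omega : j < Q+1), if_pos (by omega), term1_eq,
          show P+(Q-j)+1 = P+Q+1-j by omega]
        push_cast
        ring
      · rw [if_neg hjQ, if_neg (by omega : ¬ j < Q+1)]
        simp
    have Hsum : (∑ m ∈ Finset.range (j+1), (((j+1).choose (m+1) : ℕ):ℂ) *
        (if m ≤ P then
            (if (((P-m : ℕ):ℤ) + (Q:ℤ) + 2 = -(n - ((j:ℤ) - (m:ℤ)))) then
              (((P-m)+1 : ℕ):ℂ) * co κ (P-m) Q else 0)
          else 0))
        = (1/(2*κ)) * (-1:ℂ)^P *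
            (((∑ m ∈ Finset.range (j+1), (if m < P+1 then
                (-1:ℤ)^m * ((j+1).choose (m+1) : ℤ) * ((P+Q+1-m).choose (P-m) : ℤ)
              else 0)) : ℤ) : ℂ) := by
      push_cast
      rw [Finset.mul_sum]
      apply Finset.sum_congr rfl
      intro m hm
      by_cases hmP : m ≤ P
      · rw [if_pos hmP, if_pos (by omega), if_pos (by omega : m < P+1), term2_eq,
          show P-m+Q+1 = P+Q+1-m by omega, sgn P m hmP]
        push_cast
        ring
      · rw [if_neg hmP, if_neg (by omega : ¬ m < P+1)]
        simp
    have H3 : ((n - (j:ℤ) : ℤ):ℂ) * (if ((P:ℤ) + (Q:ℤ) + 2 = -(n - (j:ℤ))) then co κ P Q else 0)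
        = (1/(2*κ)) * (-1:ℂ)^P * ((-(((P+Q+2).choose (P+1) : ℕ) : ℤ)) : ℂ) := by
      rw [if_pos (by omega)]
      have h0 : n - (j:ℤ) = -((P+Q+2 : ℕ):ℤ) := by push_cast; omega
      rw [h0, co]
      have hdne : ((P:ℂ)+(Q:ℂ)+2) ≠ 0 := by
        rw [show ((P:ℂ)+(Q:ℂ)+2) = ((P+Q+2:ℕ):ℂ) from by push_cast; ring]
        exact Nat.cast_ne_zero.mpr (by omega)
      push_cast
      field_simp
      ring
    rw [H1, Hsum, H3]
    have hz : ((if j < Q+1 then ((P+Q+1-j).choose (P+1) : ℤ) else 0)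
        + (∑ m ∈ Finset.range (j+1), (if m < P+1 then
            (-1:ℤ)^m * ((j+1).choose (m+1) : ℤ) * ((P+Q+1-m).choose (P-m) : ℤ)
          else 0))
        + (-(((P+Q+2).choose (P+1) : ℕ) : ℤ))) = 0 := by
      omega
    calc (1/(2*κ)) * (-1:ℂ)^P * (((if j < Q+1 then ((P+Q+1-j).choose (P+1) : ℤ) else 0) : ℤ) : ℂ)
          + (1/(2*κ)) * (-1:ℂ)^P *
            (((∑ m ∈ Finset.range (j+1), (if m < P+1 then
                (-1:ℤ)^m * ((j+1).choose (m+1) : ℤ) * ((P+Q+1-m).choose (P-m) : ℤ)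
              else 0)) : ℤ) : ℂ)
          + (1/(2*κ)) * (-1:ℂ)^P * ((-(((P+Q+2).choose (P+1) : ℕ) : ℤ)) : ℂ)
        = (1/(2*κ)) * (-1:ℂ)^P *
            ((((if j < Q+1 then ((P+Q+1-j).choose (P+1) : ℤ) else 0)
              + (∑ m ∈ Finset.range (j+1), (if m < P+1 then
                  (-1:ℤ)^m * ((j+1).choose (m+1) : ℤ) * ((P+Q+1-m).choose (P-m) : ℤ)
                else 0))
              + (-(((P+Q+2).choose (P+1) : ℕ) : ℤ))) : ℤ) : ℂ) := by
          push_cast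
          ring
      _ = 0 := by rw [hz]; simp
  · -- all guards fail
    rw [if_neg (by omega : ¬ ((P:ℤ) + (Q:ℤ) + 2 = -(n - (j:ℤ)))), mul_zero]
    have hA : (if j ≤ Q then
        (if ((P:ℤ) + ((Q-j : ℕ):ℤ) + 2 = -n) then (((Q-j)+1 : ℕ):ℂ) * co κ P (Q-j) else 0)
      else 0) = 0 := by
      by_cases hjQ : j ≤ Q
      · rw [if_pos hjQ, if_neg (by omega)]
      · rw [if_neg hjQ]
    have hB : (∑ m ∈ Finset.range (j+1), (((j+1).choose (m+1) : ℕ):ℂ) *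
        (if m ≤ P then
            (if (((P-m : ℕ):ℤ) + (Q:ℤ) + 2 = -(n - ((j:ℤ) - (m:ℤ)))) then
              (((P-m)+1 : ℕ):ℂ) * co κ (P-m) Q else 0)
          else 0)) = 0 := by
      apply Finset.sum_eq_zero
      intro m hm
      by_cases hmP : m ≤ P
      · rw [if_pos hmP, if_neg (by omega), mul_zero]
      · rw [if_neg hmP, mul_zero]
    rw [hA, hB]
    ring


open MvPolynomial

def mon (r : ℕ) (P Q : Fin r) : MvPolynomial (Fin r ⊕ Fin r) ℂ :=
  X (Sum.inl P) * X (Sum.inr Q)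

lemma pderiv_inl_mon (r : ℕ) (i P Q : Fin r) :
    pderiv (Sum.inl i) (mon r P Q) = if i = P then X (Sum.inr Q) else 0 := by
  unfold mon
  rw [pderiv_mul]
  by_cases h : i = P
  · subst h
    rw [pderiv_X_self, pderiv_X_of_ne (show Sum.inr Q ≠ Sum.inl i by simp)]
    simp
  · rw [pderiv_X_of_ne (show Sum.inl P ≠ Sum.inl i by
        simp only [Ne, Sum.inl.injEq]; exact fun hh => h hh.symm),
      pderiv_X_of_ne (show Sum.inr Q ≠ Sum.inl i by simp)]
    simp [h]

lemma pderiv_inr_mon (r : ℕ) (i P Q : Fin r) :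
    pderiv (Sum.inr i) (mon r P Q) = if i = Q then X (Sum.inl P) else 0 := by
  unfold mon
  rw [pderiv_mul]
  by_cases h : i = Q
  · subst h
    rw [pderiv_X_self, pderiv_X_of_ne (show Sum.inl P ≠ Sum.inr i by simp)]
    simp
  · rw [pderiv_X_of_ne (show Sum.inr Q ≠ Sum.inr i by
        simp only [Ne, Sum.inr.injEq]; exact fun hh => h hh.symm),
      pderiv_X_of_ne (show Sum.inl P ≠ Sum.inr i by simp)]
    simp [h]

lemma Dlam_mon (r k : ℕ) (P Q : Fin r) :
    Dlam r k (mon r P Q)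
      = if h : (P : ℕ) + 1 + k ≤ r then
          (((P : ℕ) + 1 : ℕ) : ℂ) • mon r ⟨(P : ℕ) + k, by omega⟩ Q else 0 := by
  unfold Dlam
  rw [LinearMap.sum_apply]
  rw [Finset.sum_eq_single P]
  · rw [apply_dite (fun (L : Module.End ℂ (MvPolynomial (Fin r ⊕ Fin r) ℂ)) => L (mon r P Q))]
    split_ifs with h
    · simp only [LinearMap.smul_apply, LinearMap.comp_apply, LinearMap.mulLeft_apply,
        Derivation.coeFn_coe, LinearMap.coe_coe]
      rw [pderiv_inl_mon, if_pos rfl]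
      rfl
    · simp
  · intro i _ hiP
    rw [apply_dite (fun (L : Module.End ℂ (MvPolynomial (Fin r ⊕ Fin r) ℂ)) => L (mon r P Q))]
    split_ifs with h
    · simp only [LinearMap.smul_apply, LinearMap.comp_apply, LinearMap.mulLeft_apply,
        Derivation.coeFn_coe, LinearMap.coe_coe]
      rw [pderiv_inl_mon, if_neg hiP]
      simp
    · simp
  · simp

lemma Dmu_mon (r k : ℕ) (P Q : Fin r) :
    Dmu r k (mon r P Q)
      = if h : (Q : ℕ) + 1 + k ≤ r then
          (((Q : ℕ) + 1 : ℕ) : ℂ) • mon r P ⟨(Q : ℕ) + k, by omega⟩ else 0 := by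
  unfold Dmu
  rw [LinearMap.sum_apply]
  rw [Finset.sum_eq_single Q]
  · rw [apply_dite (fun (L : Module.End ℂ (MvPolynomial (Fin r ⊕ Fin r) ℂ)) => L (mon r P Q))]
    split_ifs with h
    · simp only [LinearMap.smul_apply, LinearMap.comp_apply, LinearMap.mulLeft_apply,
        Derivation.coeFn_coe, LinearMap.coe_coe]
      rw [pderiv_inr_mon, if_pos rfl]
      unfold mon
      rw [mul_comm]
    · simp
  · intro i _ hiQ
    rw [apply_dite (fun (L : Module.End ℂ (MvPolynomial (Fin r ⊕ Fin r) ℂ)) => L (mon r P Q))]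
    split_ifs with h
    · simp only [LinearMap.smul_apply, LinearMap.comp_apply, LinearMap.mulLeft_apply,
        Derivation.coeFn_coe, LinearMap.coe_coe]
      rw [pderiv_inr_mon, if_neg hiQ]
      simp
    · simp
  · simp

lemma shift_sum_nat {M : Type*} [AddCommMonoid M] (r k : ℕ) (G : ℕ → M) :
    ∑ q ∈ Finset.range r, (if q + 1 + k ≤ r then G (q + k) else 0)
      = ∑ Q ∈ Finset.range r, (if k ≤ Q then G Q else 0) := by
  classical
  rw [← Finset.sum_filter, ← Finset.sum_filter]
  rw [show (Finset.range r).filter (fun q => q + 1 + k ≤ r) = Finset.range (r - k) from by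
      ext x; simp only [Finset.mem_filter, Finset.mem_range]; omega,
    show (Finset.range r).filter (fun Q => k ≤ Q) = Finset.Ico k r from by
      ext x; simp only [Finset.mem_filter, Finset.mem_range, Finset.mem_Ico]; omega]
  rw [Finset.sum_Ico_eq_sum_range]
  apply Finset.sum_congr rfl
  intro i _
  rw [Nat.add_comm k i]

lemma shift_sum {M : Type*} [AddCommMonoid M] (r k : ℕ) (F : Fin r → M) :
    ∑ q : Fin r, (if h : (q : ℕ) + 1 + k ≤ r then F ⟨(q : ℕ) + k, by omega⟩ else 0)
      = ∑ Q : Fin r, (if k ≤ (Q : ℕ) then F Q else 0) := by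
  classical
  have hL : ∀ q : Fin r, (if h : (q : ℕ) + 1 + k ≤ r then F ⟨(q : ℕ) + k, by omega⟩ else 0)
      = if (q : ℕ) + 1 + k ≤ r then
          (if h : (q : ℕ) + k < r then F ⟨(q : ℕ) + k, h⟩ else 0) else 0 := by
    intro q
    split_ifs with h h2
    · rfl
    · exact absurd (by omega) h2
    · rfl
  have hR : ∀ Q : Fin r, (if k ≤ (Q : ℕ) then F Q else 0)
      = if k ≤ (Q : ℕ) then (if h : (Q : ℕ) < r then F ⟨(Q : ℕ), h⟩ else 0) else 0 := by
    intro Q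
    split_ifs with h h2
    · rfl
    · exact absurd Q.isLt h2
    · rfl
  simp only [hL, hR]
  rw [Fin.sum_univ_eq_sum_range
        (fun x => if x + 1 + k ≤ r then (if h : x + k < r then F ⟨x + k, h⟩ else 0) else 0) r,
      Fin.sum_univ_eq_sum_range
        (fun x => if k ≤ x then (if h : x < r then F ⟨x, h⟩ else 0) else 0) r]
  exact shift_sum_nat r k (fun x => if h : x < r then F ⟨x, h⟩ else 0)

lemma fk_eq (r : ℕ) (κ : ℂ) (n : ℤ) :
    fk r κ n = ∑ p : Fin r, ∑ q : Fin r,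
      (if ((p : ℕ) + (q : ℕ) + 2 : ℤ) = -n then co κ (p : ℕ) (q : ℕ) else 0) • mon r p q := by
  unfold fk
  apply Finset.sum_congr rfl
  intro p _
  apply Finset.sum_congr rfl
  intro q _
  split_ifs with h
  · rw [smul_eq_C_mul, co, mon, mul_assoc]
  · rw [zero_smul]

theorem statement4 (r : ℕ) (hr : 1 ≤ r) (κ : ℂ) (hκ : κ ≠ 0) (j : ℕ) (n : ℤ) (hn : n < 0) :
    Dmu r j (fk r κ n)
      + ∑ m ∈ Finset.range (j + 1),
          ((Nat.choose (j + 1) (m + 1) : ℕ) : ℂ) • Dlam r m (fk r κ (n - ((j : ℤ) - (m : ℤ))))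
      + ((n - (j : ℤ) : ℤ) : ℂ) • fk r κ (n - (j : ℤ)) = 0 := by
  classical
  have hA : Dmu r j (fk r κ n)
      = ∑ p : Fin r, ∑ Q : Fin r,
          (if j ≤ (Q : ℕ) then
            (if ((p : ℕ) : ℤ) + (((Q : ℕ) - j : ℕ) : ℤ) + 2 = -n then
              ((((Q : ℕ) - j) + 1 : ℕ) : ℂ) * co κ (p : ℕ) ((Q : ℕ) - j) else 0)
           else 0) • mon r p Q := by
    rw [fk_eq, map_sum]
    apply Finset.sum_congr rfl
    intro p _
    rw [map_sum]
    refine Eq.trans (Finset.sum_congr rfl ?_)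
      (Eq.trans (shift_sum r j (fun t =>
          (if ((p : ℕ) : ℤ) + (((t : ℕ) - j : ℕ) : ℤ) + 2 = -n then
            ((((t : ℕ) - j) + 1 : ℕ) : ℂ) * co κ (p : ℕ) ((t : ℕ) - j) else 0) • mon r p t))
        (Finset.sum_congr rfl ?_))
    · intro q _
      rw [map_smul, Dmu_mon]
      by_cases h : (q : ℕ) + 1 + j ≤ r
      · rw [dif_pos h, dif_pos h]
        simp only [smul_smul, Nat.add_sub_cancel]
        congr 1
        split_ifs <;> ring
      · rw [dif_neg h, dif_neg h, smul_zero]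
    · intro Q _
      split_ifs <;> simp
  have hB : ∀ m : ℕ, Dlam r m (fk r κ (n - ((j : ℤ) - (m : ℤ))))
      = ∑ P : Fin r, ∑ q : Fin r,
          (if m ≤ (P : ℕ) then
            (if (((P : ℕ) - m : ℕ) : ℤ) + ((q : ℕ) : ℤ) + 2 = -(n - ((j : ℤ) - (m : ℤ))) then
              ((((P : ℕ) - m) + 1 : ℕ) : ℂ) * co κ ((P : ℕ) - m) (q : ℕ) else 0)
           else 0) • mon r P q := by
    intro m
    rw [fk_eq, map_sum]
    refine Eq.trans (Finset.sum_congr rfl ?_)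
      (Eq.trans (shift_sum r m (fun t => ∑ q : Fin r,
          (if (((t : ℕ) - m : ℕ) : ℤ) + ((q : ℕ) : ℤ) + 2 = -(n - ((j : ℤ) - (m : ℤ))) then
            ((((t : ℕ) - m) + 1 : ℕ) : ℂ) * co κ ((t : ℕ) - m) (q : ℕ) else 0) • mon r t q))
        (Finset.sum_congr rfl ?_))
    · intro p _
      rw [map_sum]
      by_cases h : (p : ℕ) + 1 + m ≤ r
      · rw [dif_pos h]
        refine Finset.sum_congr rfl ?_
        intro q _
        rw [map_smul, Dlam_mon, dif_pos h]
        simp only [smul_smul, Nat.add_sub_cancel]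
        congr 1
        split_ifs <;> ring
      · rw [dif_neg h]
        apply Finset.sum_eq_zero
        intro q _
        rw [map_smul, Dlam_mon, dif_neg h, smul_zero]
    · intro P _
      by_cases h : m ≤ (P : ℕ)
      · rw [if_pos h]
        apply Finset.sum_congr rfl
        intro q _
        rw [if_pos h]
      · rw [if_neg h]
        symm
        apply Finset.sum_eq_zero
        intro q _
        rw [if_neg h, zero_smul]
  have hBB : (∑ m ∈ Finset.range (j + 1),
        ((Nat.choose (j + 1) (m + 1) : ℕ) : ℂ) • Dlam r m (fk r κ (n - ((j : ℤ) - (m : ℤ)))))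
      = ∑ P : Fin r, ∑ q : Fin r,
          (∑ m ∈ Finset.range (j + 1), ((Nat.choose (j + 1) (m + 1) : ℕ) : ℂ) *
            (if m ≤ (P : ℕ) then
              (if (((P : ℕ) - m : ℕ) : ℤ) + ((q : ℕ) : ℤ) + 2 = -(n - ((j : ℤ) - (m : ℤ))) then
                ((((P : ℕ) - m) + 1 : ℕ) : ℂ) * co κ ((P : ℕ) - m) (q : ℕ) else 0)
             else 0)) • mon r P q := by
    rw [Finset.sum_congr rfl (fun m _ => by rw [hB m])]
    simp only [Finset.smul_sum, smul_smul]
    rw [Finset.sum_comm]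
    apply Finset.sum_congr rfl
    intro P _
    rw [Finset.sum_comm]
    apply Finset.sum_congr rfl
    intro q _
    rw [← Finset.sum_smul]
  have hCC : ((n - (j : ℤ) : ℤ) : ℂ) • fk r κ (n - (j : ℤ))
      = ∑ p : Fin r, ∑ q : Fin r,
          (((n - (j : ℤ) : ℤ) : ℂ) *
            (if ((p : ℕ) + (q : ℕ) + 2 : ℤ) = -(n - (j : ℤ)) then co κ (p : ℕ) (q : ℕ) else 0))
            • mon r p q := by
    rw [fk_eq]
    simp only [Finset.smul_sum, smul_smul]
  rw [hA, hBB, hCC, ← Finset.sum_add_distrib, ← Finset.sum_add_distrib]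
  apply Finset.sum_eq_zero
  intro p _
  rw [← Finset.sum_add_distrib, ← Finset.sum_add_distrib]
  apply Finset.sum_eq_zero
  intro Q _
  rw [← add_smul, ← add_smul]
  rw [scalar_zero κ hκ j n hn (p : ℕ) (Q : ℕ), zero_smul]

end
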